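/- Let R : X → ℝ be a rate function over Q (i.e., Q{R(·) ≥ t} ≤ 2^{-n t} for all t ∈ ℝ), and suppose there is B ≥ 0 such that Q{x : n·R(x) ≥ B} = 0. Then E_Q[2^{n·R(X)}] ≤ 1 + ln(2)·B. -/

import Mathlib

open Finset

lemma two_rpow_continuous' : Continuous fun t : ℝ => Real.log 2 * (2:ℝ) ^ t := by
  have h : (fun t : ℝ => (2:ℝ) ^ t) = fun t => Real.exp (Real.log 2 * t) := by
    funext t; rw [Real.rpow_def_of_pos two_pos]
  refine continuous_const.mul ?_
  show Continuous fun t : ℝ => (2:ℝ) ^ t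
  rw [h]
  exact Real.continuous_exp.comp (continuous_const.mul continuous_id)

lemma two_rpow_ftc (c : ℝ) :
    ∫ t in (0:ℝ)..c, Real.log 2 * (2:ℝ) ^ t = (2:ℝ) ^ c - 1 := by
  have h := intervalIntegral.integral_eq_sub_of_hasDerivAt
    (f := fun t : ℝ => (2:ℝ) ^ t) (f' := fun t : ℝ => Real.log 2 * (2:ℝ) ^ t)
    (a := 0) (b := c)
    (fun t _ => by
      simpa [mul_comm] using (Real.hasStrictDerivAt_const_rpow two_pos t).hasDerivAt)
    ((two_rpow_continuous').intervalIntegrable 0 c)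
  simpa using h

/-- Layer-cake bound: if `R` is a rate function over `Q` which is bounded,
`Q{x : n·R(x) ≥ B} = 0`, then `E_Q[2^{n R(X)}] ≤ 1 + ln(2)·B`. -/
theorem rate_function_exp_bound
    {X : Type*} [Fintype X] [Nonempty X]
    (Q : X → ℝ) (hQ0 : ∀ x, 0 ≤ Q x) (hQ1 : ∑ x, Q x = 1)
    (n : ℝ) (hn : 0 < n) (R : X → ℝ)
    (hR : ∀ t : ℝ, ∑ x ∈ univ.filter (fun x => t ≤ R x), Q x ≤ (2 : ℝ) ^ (-n * t))
    (B : ℝ) (hB : 0 ≤ B)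
    (hbound : ∑ x ∈ univ.filter (fun x => B ≤ n * R x), Q x = 0) :
    ∑ x, Q x * (2 : ℝ) ^ (n * R x) ≤ 1 + Real.log 2 * B := by
  have hlog : (0:ℝ) ≤ Real.log 2 := Real.log_nonneg one_le_two
  set f : X → ℝ → ℝ :=
    fun x => Set.indicator {t : ℝ | t ≤ n * R x} (fun t => Real.log 2 * (2:ℝ) ^ t) with hf
  have hint : ∀ x, IntervalIntegrable (f x) MeasureTheory.volume 0 B := by
    intro x
    rw [intervalIntegrable_iff]
    exact ((two_rpow_continuous').integrableOn_uIoc).indicator measurableSet_Iic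
  -- per-x bound
  have key : ∀ x, Q x * (2:ℝ) ^ (n * R x) ≤ Q x * (1 + ∫ t in (0:ℝ)..B, f x t) := by
    intro x
    rcases eq_or_lt_of_le (hQ0 x) with h0 | h0
    · simp [← h0]
    · have hcB : n * R x < B := by
        by_contra hle
        have hz := (Finset.sum_eq_zero_iff_of_nonneg (fun y _ => hQ0 y)).mp hbound x
          (by simp [not_lt.mp hle])
        exact absurd hz.symm h0.ne
      have hQx : 0 ≤ Q x := hQ0 x
      refine mul_le_mul_of_nonneg_left ?_ hQx
      rcases le_or_gt (n * R x) 0 with hc | hc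
      · have hzero : (∫ t in (0:ℝ)..B, f x t) = 0 := by
          rw [intervalIntegral.integral_of_le hB]
          apply MeasureTheory.setIntegral_eq_zero_of_forall_eq_zero
          intro t ht
          have : ¬ t ≤ n * R x := by
            have := ht.1
            linarith
          simp [hf, Set.indicator_apply, this]
        rw [hzero]
        simpa using Real.rpow_le_one_of_one_le_of_nonpos one_le_two hc
      · have heq : (∫ t in (0:ℝ)..B, f x t) = (2:ℝ) ^ (n * R x) - 1 := by
          rw [hf]
          rw [intervalIntegral.integral_indicator (Set.mem_Icc.mpr ⟨hc.le, hcB.le⟩)]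
          exact two_rpow_ftc _
        rw [heq]
        ring_nf
        exact le_refl _
  -- pointwise bound on the summed integrand
  have hpt : ∀ t ∈ Set.Icc (0:ℝ) B, (∑ x, Q x * f x t) ≤ Real.log 2 := by
    intro t _
    have hsum : (∑ x, Q x * f x t)
        = (∑ x ∈ univ.filter (fun x => t ≤ n * R x), Q x) * (Real.log 2 * (2:ℝ) ^ t) := by
      rw [Finset.sum_mul, Finset.sum_filter]
      apply Finset.sum_congr rfl
      intro x _
      by_cases h : t ≤ n * R x <;> simp [hf, Set.indicator_apply, h]
    have hfilter : univ.filter (fun x : X => t ≤ n * R x)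
        = univ.filter (fun x : X => t / n ≤ R x) := by
      apply Finset.filter_congr
      intro x _
      rw [div_le_iff₀ hn, mul_comm]
    have hb : (∑ x ∈ univ.filter (fun x : X => t ≤ n * R x), Q x) ≤ (2:ℝ) ^ (-t) := by
      rw [hfilter]
      have := hR (t / n)
      have he : -n * (t / n) = -t := by field_simp
      rwa [he] at this
    rw [hsum]
    have hM : (0:ℝ) ≤ Real.log 2 * (2:ℝ) ^ t :=
      mul_nonneg hlog (Real.rpow_nonneg (by norm_num) t)
    calc (∑ x ∈ univ.filter (fun x : X => t ≤ n * R x), Q x) * (Real.log 2 * (2:ℝ) ^ t)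
        ≤ (2:ℝ) ^ (-t) * (Real.log 2 * (2:ℝ) ^ t) := mul_le_mul_of_nonneg_right hb hM
      _ = Real.log 2 * ((2:ℝ) ^ (-t) * (2:ℝ) ^ t) := by ring
      _ = Real.log 2 := by
          rw [← Real.rpow_add two_pos]
          simp
  -- assemble
  have hintsum : IntervalIntegrable (fun t => ∑ x, Q x * f x t) MeasureTheory.volume 0 B := by
    rw [intervalIntegrable_iff]
    apply MeasureTheory.integrable_finset_sum
    intro x _
    exact (((hint x).def'.const_mul (Q x)))
  calc ∑ x, Q x * (2:ℝ) ^ (n * R x)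
      ≤ ∑ x, Q x * (1 + ∫ t in (0:ℝ)..B, f x t) :=
        Finset.sum_le_sum (fun x _ => key x)
    _ = (∑ x, Q x) + ∑ x, Q x * ∫ t in (0:ℝ)..B, f x t := by
        simp [mul_add, Finset.sum_add_distrib, mul_one]
    _ = 1 + ∫ t in (0:ℝ)..B, ∑ x, Q x * f x t := by
        rw [hQ1]
        congr 1
        rw [intervalIntegral.integral_finset_sum (fun x _ => (hint x).const_mul (Q x))]
        apply Finset.sum_congr rfl
        intro x _
        rw [intervalIntegral.integral_const_mul]
    _ ≤ 1 + ∫ _t in (0:ℝ)..B, Real.log 2 := by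
        gcongr
        exact intervalIntegral.integral_mono_on hB hintsum intervalIntegrable_const hpt
    _ = 1 + Real.log 2 * B := by
        rw [intervalIntegral.integral_const]
        simp [mul_comm]
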